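/- Let A ∈ ℝ^{m×n} and b ∈ ℝ^m be nonzero with the solution set H = {x : Ax = b} nonempty, and suppose ker A ≠ {0}. Then 0 belongs to the closed convex hull of ρ(cone(H)), where ρ is the radial projection of any norm, yet 0 ∉ cone(H); consequently cone(H) is not Capra-convex. -/

import Mathlib

open Classical in
noncomputable def radProj {d : ℕ} (N : EuclideanSpace ℝ (Fin d) → ℝ)
    (x : EuclideanSpace ℝ (Fin d)) : EuclideanSpace ℝ (Fin d) :=
  if x = 0 then 0 else (N x)⁻¹ • x

noncomputable def capraConj {d : ℕ} (N : EuclideanSpace ℝ (Fin d) → ℝ)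
    (f : EuclideanSpace ℝ (Fin d) → EReal) (y : EuclideanSpace ℝ (Fin d)) : EReal :=
  ⨆ x : EuclideanSpace ℝ (Fin d), ((inner ℝ (radProj N x) y : ℝ) : EReal) - f x

noncomputable def capraBiconj {d : ℕ} (N : EuclideanSpace ℝ (Fin d) → ℝ)
    (f : EuclideanSpace ℝ (Fin d) → EReal) (x : EuclideanSpace ℝ (Fin d)) : EReal :=
  ⨆ y : EuclideanSpace ℝ (Fin d), ((inner ℝ (radProj N x) y : ℝ) : EReal) - capraConj N f y

open Classical in
noncomputable def ind {d : ℕ} (X : Set (EuclideanSpace ℝ (Fin d)))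
    (x : EuclideanSpace ℝ (Fin d)) : EReal :=
  if x ∈ X then 0 else ⊤

def IsCapraConvex {d : ℕ} (N : EuclideanSpace ℝ (Fin d) → ℝ)
    (X : Set (EuclideanSpace ℝ (Fin d))) : Prop :=
  ind X = capraBiconj N (ind X)

def coneHull {d : ℕ} (A : Set (EuclideanSpace ℝ (Fin d))) : Set (EuclideanSpace ℝ (Fin d)) :=
  {y | ∃ a ∈ A, ∃ l : ℝ, 0 < l ∧ y = l • a}

section helpers
variable {n : ℕ} (N : EuclideanSpace ℝ (Fin n) → ℝ)

lemma N_nonneg (hN0 : ∀ x : EuclideanSpace ℝ (Fin n), N x = 0 ↔ x = 0)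
    (hNh : ∀ (a : ℝ) (x : EuclideanSpace ℝ (Fin n)), N (a • x) = |a| * N x)
    (hNt : ∀ x y : EuclideanSpace ℝ (Fin n), N (x + y) ≤ N x + N y)
    (x : EuclideanSpace ℝ (Fin n)) : 0 ≤ N x := by
  have h0 : N 0 = 0 := (hN0 0).2 rfl
  have h1 := hNt x (-x)
  rw [add_neg_cancel, h0] at h1
  have hneg : N (-x) = N x := by simpa using hNh (-1) x
  linarith [hneg ▸ h1]

lemma N_cont (hN0 : ∀ x : EuclideanSpace ℝ (Fin n), N x = 0 ↔ x = 0)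
    (hNh : ∀ (a : ℝ) (x : EuclideanSpace ℝ (Fin n)), N (a • x) = |a| * N x)
    (hNt : ∀ x y : EuclideanSpace ℝ (Fin n), N (x + y) ≤ N x + N y) :
    Continuous N := by
  have h0 : N 0 = 0 := (hN0 0).2 rfl
  have hneg : ∀ x, N (-x) = N x := fun x => by simpa using hNh (-1) x
  set C : ℝ := ∑ j : Fin n, N (EuclideanSpace.single j (1:ℝ)) with hC
  have hdecomp : ∀ x : EuclideanSpace ℝ (Fin n),
      x = ∑ j : Fin n, x j • EuclideanSpace.single j (1:ℝ) := by
    intro x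
    have h := (EuclideanSpace.basisFun (Fin n) ℝ).sum_repr x
    simp only [EuclideanSpace.basisFun_repr, EuclideanSpace.basisFun_apply] at h
    exact h.symm
  have hsum : ∀ (s : Finset (Fin n)) (f : Fin n → EuclideanSpace ℝ (Fin n)),
      N (∑ j ∈ s, f j) ≤ ∑ j ∈ s, N (f j) := by
    intro s f
    induction s using Finset.cons_induction with
    | empty => simp [h0]
    | cons a s ha ih =>
      rw [Finset.sum_cons, Finset.sum_cons]
      exact le_trans (hNt _ _) (by linarith)
  have habs : ∀ (x : EuclideanSpace ℝ (Fin n)) (j : Fin n), |x j| ≤ ‖x‖ := by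
    intro x j
    have h := abs_real_inner_le_norm (EuclideanSpace.single j (1:ℝ)) x
    rw [EuclideanSpace.inner_single_left] at h
    simpa [EuclideanSpace.norm_single] using h
  have hbound : ∀ x : EuclideanSpace ℝ (Fin n), N x ≤ C * ‖x‖ := by
    intro x
    calc N x = N (∑ j : Fin n, x j • EuclideanSpace.single j (1:ℝ)) := by rw [← hdecomp]
    _ ≤ ∑ j : Fin n, N (x j • EuclideanSpace.single j (1:ℝ)) := hsum _ _
    _ = ∑ j : Fin n, |x j| * N (EuclideanSpace.single j (1:ℝ)) := by simp [hNh]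
    _ ≤ ∑ j : Fin n, ‖x‖ * N (EuclideanSpace.single j (1:ℝ)) := by
        apply Finset.sum_le_sum
        intro j _
        exact mul_le_mul_of_nonneg_right (habs x j) (N_nonneg N hN0 hNh hNt _)
    _ = C * ‖x‖ := by rw [hC, Finset.sum_mul]; exact Finset.sum_congr rfl (fun j _ => mul_comm _ _)
  have hlip : ∀ x y : EuclideanSpace ℝ (Fin n), |N x - N y| ≤ C * ‖x - y‖ := by
    intro x y
    have h1 : N x ≤ N (x - y) + N y := by
      have := hNt (x - y) y; simpa using this
    have h2 : N y ≤ N (x - y) + N x := by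
      have h3 := hNt (y - x) x
      rw [sub_add_cancel] at h3
      calc N y ≤ N (y - x) + N x := h3
      _ = N (x - y) + N x := by rw [← hneg (x - y)]; congr 2; abel
    rw [abs_sub_le_iff]
    constructor <;> nlinarith [hbound (x - y)]
  have hCnn : 0 ≤ C := Finset.sum_nonneg fun j _ => N_nonneg N hN0 hNh hNt _
  have hl : LipschitzWith C.toNNReal N := by
    apply LipschitzWith.of_dist_le_mul
    intro x y
    rw [Real.dist_eq, dist_eq_norm]
    calc |N x - N y| ≤ C * ‖x - y‖ := hlip x y
    _ = (C.toNNReal : ℝ) * ‖x - y‖ := by rw [Real.coe_toNNReal _ hCnn]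
  exact hl.continuous

lemma radProj_smul (hN0 : ∀ x : EuclideanSpace ℝ (Fin n), N x = 0 ↔ x = 0)
    (hNh : ∀ (a : ℝ) (x : EuclideanSpace ℝ (Fin n)), N (a • x) = |a| * N x)
    {l : ℝ} (hl : 0 < l) (x : EuclideanSpace ℝ (Fin n)) :
    radProj N (l • x) = radProj N x := by
  by_cases hx : x = 0
  · simp [radProj, hx]
  · have hlx : l • x ≠ 0 := smul_ne_zero hl.ne' hx
    have hNx : N x ≠ 0 := fun h => hx ((hN0 x).1 h)
    rw [radProj, radProj, if_neg hlx, if_neg hx, hNh, abs_of_pos hl, smul_smul]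
    congr 1
    field_simp

lemma radProj_neg (hNh : ∀ (a : ℝ) (x : EuclideanSpace ℝ (Fin n)), N (a • x) = |a| * N x)
    (x : EuclideanSpace ℝ (Fin n)) : radProj N (-x) = - radProj N x := by
  by_cases hx : x = 0
  · simp [radProj, hx]
  · have hneg : N (-x) = N x := by simpa using hNh (-1) x
    rw [radProj, radProj, if_neg (neg_ne_zero.2 hx), if_neg hx, hneg, smul_neg]

lemma radProj_contAt (hN0 : ∀ x : EuclideanSpace ℝ (Fin n), N x = 0 ↔ x = 0)
    (hNc : Continuous N)
    {u : EuclideanSpace ℝ (Fin n)} (hu : u ≠ 0) :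
    ContinuousAt (radProj N) u := by
  have hNu : N u ≠ 0 := fun h => hu ((hN0 u).1 h)
  have hg : ContinuousAt (fun x : EuclideanSpace ℝ (Fin n) => (N x)⁻¹ • x) u :=
    ((hNc.continuousAt).inv₀ hNu).smul continuousAt_id
  apply hg.congr
  have hmem : {x : EuclideanSpace ℝ (Fin n) | x ≠ 0} ∈ nhds u :=
    (isOpen_compl_singleton).mem_nhds hu
  filter_upwards [hmem] with x hx
  rw [radProj, if_neg hx]

lemma ereal_le_of_tendsto {f : ℕ → ℝ} {a : ℝ} {B : EReal}
    (h : Filter.Tendsto f Filter.atTop (nhds a)) (hf : ∀ k, (f k : EReal) ≤ B) :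
    (a : EReal) ≤ B := by
  induction B with
  | bot => exact absurd (hf 0) (by simp)
  | coe r =>
      exact EReal.coe_le_coe_iff.2 (le_of_tendsto h
        (Filter.Eventually.of_forall fun k => EReal.coe_le_coe_iff.1 (hf k)))
  | top => exact le_top

end helpers

theorem stmt {m n : ℕ} (N : EuclideanSpace ℝ (Fin n) → ℝ)
    (hN0 : ∀ x : EuclideanSpace ℝ (Fin n), N x = 0 ↔ x = 0)
    (hNh : ∀ (a : ℝ) (x : EuclideanSpace ℝ (Fin n)), N (a • x) = |a| * N x)
    (hNt : ∀ x y : EuclideanSpace ℝ (Fin n), N (x + y) ≤ N x + N y)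
    (A : Matrix (Fin m) (Fin n) ℝ) (b : Fin m → ℝ) (hA : A ≠ 0) (hb : b ≠ 0)
    (H : Set (EuclideanSpace ℝ (Fin n))) (hH : H = {x : EuclideanSpace ℝ (Fin n) | ∀ i, ∑ j, A i j * x j = b i})
    (hHne : H.Nonempty)
    (hker : ∃ x : EuclideanSpace ℝ (Fin n), x ≠ 0 ∧ ∀ i, ∑ j, A i j * x j = 0) :
    (0 : EuclideanSpace ℝ (Fin n)) ∈ closure (convexHull ℝ (radProj N '' coneHull H)) ∧
    (0 : EuclideanSpace ℝ (Fin n)) ∉ coneHull H ∧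
    ¬ IsCapraConvex N (coneHull H) := by
  obtain ⟨x0, hx0⟩ := hHne
  obtain ⟨u, hu0, hAu⟩ := hker
  have hx0H : ∀ i, ∑ j, A i j * x0 j = b i := by rw [hH] at hx0; exact hx0
  have hNc : Continuous N := N_cont N hN0 hNh hNt
  -- 0 not in cone
  have h0K : (0 : EuclideanSpace ℝ (Fin n)) ∉ coneHull H := by
    rintro ⟨a, haH, l, hl, h0⟩
    have ha : a = 0 := by
      rcases smul_eq_zero.1 h0.symm with h | h
      · exact absurd h hl.ne'
      · exact h
    rw [hH] at haH
    subst ha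
    apply hb
    funext i
    have := haH i
    simpa using this.symm
  -- membership: x0 + t • v ∈ H when A v = 0
  have hmem : ∀ (t : ℝ) (v : EuclideanSpace ℝ (Fin n)), (∀ i, ∑ j, A i j * v j = 0) →
      x0 + t • v ∈ H := by
    intro t v hAv
    rw [hH]
    intro i
    have happ : ∀ j, (x0 + t • v) j = x0 j + t * v j := fun j => rfl
    calc ∑ j, A i j * (x0 + t • v) j
        = ∑ j, (A i j * x0 j + t * (A i j * v j)) := by
          refine Finset.sum_congr rfl fun j _ => ?_
          rw [happ]; ring
      _ = (∑ j, A i j * x0 j) + t * ∑ j, A i j * v j := by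
          rw [Finset.sum_add_distrib, Finset.mul_sum]
      _ = b i := by rw [hx0H i, hAv i, mul_zero, add_zero]
  -- key sequences
  have key : ∀ v : EuclideanSpace ℝ (Fin n), v ≠ 0 → (∀ i, ∑ j, A i j * v j = 0) →
      Filter.Tendsto (fun k : ℕ => radProj N (x0 + ((k : ℝ) + 1) • v)) Filter.atTop
        (nhds (radProj N v)) := by
    intro v hv hAv
    have heq : ∀ k : ℕ, radProj N (x0 + ((k : ℝ) + 1) • v)
        = radProj N (((k : ℝ) + 1)⁻¹ • x0 + v) := by
      intro k
      have hk : (0 : ℝ) < (k : ℝ) + 1 := by positivity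
      have : ((k : ℝ) + 1)⁻¹ • (x0 + ((k : ℝ) + 1) • v) = ((k : ℝ) + 1)⁻¹ • x0 + v := by
        rw [smul_add, smul_smul, inv_mul_cancel₀ hk.ne', one_smul]
      rw [← radProj_smul N hN0 hNh (inv_pos.2 hk) (x0 + ((k : ℝ) + 1) • v), this]
    simp only [heq]
    have harg : Filter.Tendsto (fun k : ℕ => ((k : ℝ) + 1)⁻¹ • x0 + v) Filter.atTop
        (nhds v) := by
      have h1 : Filter.Tendsto (fun k : ℕ => ((k : ℝ) + 1)⁻¹) Filter.atTop (nhds 0) := by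
        simpa using (tendsto_one_div_add_atTop_nhds_zero_nat : Filter.Tendsto (fun n : ℕ => 1 / ((n : ℝ) + 1)) Filter.atTop (nhds 0))
      have h2 : Filter.Tendsto (fun k : ℕ => ((k : ℝ) + 1)⁻¹ • x0) Filter.atTop
          (nhds ((0 : ℝ) • x0)) := h1.smul_const x0
      rw [zero_smul] at h2
      simpa using h2.add_const v
    exact ((radProj_contAt N hN0 hNc hv).tendsto).comp harg
  have hHsub : H ⊆ coneHull H := fun x hx => ⟨x, hx, 1, one_pos, (one_smul ℝ x).symm⟩
  have hseq_mem : ∀ (v : EuclideanSpace ℝ (Fin n)), (∀ i, ∑ j, A i j * v j = 0) →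
      ∀ k : ℕ, radProj N (x0 + ((k : ℝ) + 1) • v) ∈ radProj N '' coneHull H := by
    intro v hAv k
    exact ⟨_, hHsub (hmem ((k : ℝ) + 1) v hAv), rfl⟩
  have hAnu : ∀ i, ∑ j, A i j * (-u) j = 0 := by
    intro i
    have : ∀ j, (-u) j = -(u j) := fun j => rfl
    simp only [this, mul_neg, Finset.sum_neg_distrib, hAu i, neg_zero]
  have hnu0 : (-u : EuclideanSpace ℝ (Fin n)) ≠ 0 := neg_ne_zero.2 hu0
  -- closure memberships
  have hclu : radProj N u ∈ closure (radProj N '' coneHull H) :=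
    mem_closure_of_tendsto (key u hu0 hAu)
      (Filter.Eventually.of_forall (hseq_mem u hAu))
  have hclnu : radProj N (-u) ∈ closure (radProj N '' coneHull H) :=
    mem_closure_of_tendsto (key (-u) hnu0 hAnu)
      (Filter.Eventually.of_forall (hseq_mem (-u) hAnu))
  -- part 1
  have hsubcl : closure (radProj N '' coneHull H)
      ⊆ closure (convexHull ℝ (radProj N '' coneHull H)) :=
    closure_mono (subset_convexHull ℝ _)
  have hconv : Convex ℝ (closure (convexHull ℝ (radProj N '' coneHull H))) :=
    (convex_convexHull ℝ _).closure
  have hzero : (0 : EuclideanSpace ℝ (Fin n))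
      ∈ closure (convexHull ℝ (radProj N '' coneHull H)) := by
    have hmid := hconv (hsubcl hclu) (hsubcl hclnu)
      (by norm_num : (0:ℝ) ≤ 1/2) (by norm_num : (0:ℝ) ≤ 1/2) (by norm_num)
    rw [radProj_neg N hNh] at hmid
    simpa using hmid
  refine ⟨hzero, h0K, ?_⟩
  -- part 3
  intro hcap
  have hind0 : ind (coneHull H) 0 = ⊤ := if_neg h0K
  have hconjnn : ∀ y : EuclideanSpace ℝ (Fin n), (0 : EReal) ≤ capraConj N (ind (coneHull H)) y := by
    intro y
    have hterm : ∀ (v : EuclideanSpace ℝ (Fin n)), (∀ i, ∑ j, A i j * v j = 0) → v ≠ 0 →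
        ((inner ℝ (radProj N v) y : ℝ) : EReal) ≤ capraConj N (ind (coneHull H)) y := by
      intro v hAv hv
      have htend : Filter.Tendsto
          (fun k : ℕ => (inner ℝ (radProj N (x0 + ((k : ℝ) + 1) • v)) y : ℝ)) Filter.atTop
          (nhds (inner ℝ (radProj N v) y : ℝ)) :=
        ((continuous_id.inner continuous_const).tendsto _).comp (key v hv hAv)
      apply ereal_le_of_tendsto htend
      intro k
      have hK : x0 + ((k : ℝ) + 1) • v ∈ coneHull H := hHsub (hmem _ v hAv)
      have := le_iSup (fun x : EuclideanSpace ℝ (Fin n) =>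
        ((inner ℝ (radProj N x) y : ℝ) : EReal) - ind (coneHull H) x) (x0 + ((k : ℝ) + 1) • v)
      rw [ind, if_pos hK, sub_zero] at this
      exact this
    rcases le_or_gt 0 (inner ℝ (radProj N u) y : ℝ) with h | h
    · exact le_trans (by exact_mod_cast h) (hterm u hAu hu0)
    · have h' : (0:ℝ) ≤ (inner ℝ (radProj N (-u)) y : ℝ) := by
        rw [radProj_neg N hNh, inner_neg_left]
        linarith
      exact le_trans (by exact_mod_cast h') (hterm (-u) hAnu hnu0)
  have hbic : capraBiconj N (ind (coneHull H)) 0 ≤ 0 := by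
    rw [capraBiconj]
    apply iSup_le
    intro y
    have hr0 : radProj N (0 : EuclideanSpace ℝ (Fin n)) = 0 := by simp [radProj]
    rw [hr0, inner_zero_left]
    rw [EReal.coe_zero, zero_sub]
    exact EReal.neg_le.2 (by simpa using hconjnn y)
  have : (⊤ : EReal) ≤ 0 := by
    rw [← hind0]
    rw [IsCapraConvex] at hcap
    rw [hcap]
    exact hbic
  exact absurd this (by simp)
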